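/- Let 𝔤 be a real Lie algebra with an involutive Lie algebra automorphism σ, and let 𝔨 = {x ∈ 𝔤 : σ(x) = x} and 𝔭 = {x ∈ 𝔤 : σ(x) = −x}. Let X be a real vector space, let α_𝔨 : X → 𝔨 and α_𝔭 : X → 𝔭 be linear maps, and let δ_𝔨 : X × X → 𝔨 and δ_𝔭 : X × X → 𝔭 be alternating bilinear maps. For each λ ∈ ℝ define the 𝔤-valued alternating bilinear map MC_λ(u,v) := δ_𝔨(u,v) + λ·δ_𝔭(u,v) + [α_𝔨(u) + λ·α_𝔭(u), α_𝔨(v) + λ·α_𝔭(v)]. Then MC_λ = 0 for every λ ∈ ℝ if and only if MC_1 = 0 and [α_𝔭(u), α_𝔭(v)] = 0 for all u, v ∈ X. -/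

import Mathlib

private lemma half_sum {M : Type*} [AddCommGroup M] [Module ℝ M]
    (a b : M) (h1 : a + b = 0) (h2 : a + -b = 0) : a = 0 ∧ b = 0 := by
  have haa : (2 : ℝ) • a = 0 := by
    rw [two_smul]
    calc a + a = (a + b) + (a + -b) := by abel
    _ = 0 := by rw [h1, h2, add_zero]
  have hbb : (2 : ℝ) • b = 0 := by
    rw [two_smul]
    calc b + b = (a + b) - (a + -b) := by abel
    _ = 0 := by rw [h1, h2, sub_zero]
  constructor
  · have := congrArg (fun x => (2:ℝ)⁻¹ • x) haa
    simpa [smul_smul] using this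
  · have := congrArg (fun x => (2:ℝ)⁻¹ • x) hbb
    simpa [smul_smul] using this

private lemma three_coeffs {M : Type*} [AddCommGroup M] [Module ℝ M]
    (a b c : M) (ha : a = 0) (h1 : a + b + c = 0) (h2 : a + -b + c = 0) :
    b = 0 ∧ c = 0 := by
  have e1 : c + b = 0 := by
    calc c + b = (a + b + c) - a := by abel
    _ = 0 := by rw [h1, ha, sub_zero]
  have e2 : c + -b = 0 := by
    calc c + -b = (a + -b + c) - a := by abel
    _ = 0 := by rw [h2, ha, sub_zero]
  have := half_sum c b e1 e2
  exact ⟨this.2, this.1⟩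

/- STATEMENT 2: For a real Lie algebra 𝔤 with involutive automorphism σ, with
𝔨 = fix(σ) and 𝔭 = fix(−σ): given linear α_𝔨 : X → 𝔨, α_𝔭 : X → 𝔭 and alternating
bilinear δ_𝔨 : X × X → 𝔨, δ_𝔭 : X × X → 𝔭, the family
MC_λ(u,v) = δ_𝔨(u,v) + λ·δ_𝔭(u,v) + [α_𝔨(u) + λ·α_𝔭(u), α_𝔨(v) + λ·α_𝔭(v)]
vanishes for all λ ∈ ℝ iff MC_1 = 0 and [α_𝔭(u), α_𝔭(v)] = 0 for all u, v. -/
theorem curved_flat_characterization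
    {L : Type*} [LieRing L] [LieAlgebra ℝ L]
    (σ : L →ₗ⁅ℝ⁆ L) (hσinv : ∀ x, σ (σ x) = x)
    {X : Type*} [AddCommGroup X] [Module ℝ X]
    (αk αp : X →ₗ[ℝ] L)
    (hαk : ∀ x, σ (αk x) = αk x) (hαp : ∀ x, σ (αp x) = -(αp x))
    (δk δp : X →ₗ[ℝ] X →ₗ[ℝ] L)
    (hδk_alt : ∀ u, δk u u = 0) (hδp_alt : ∀ u, δp u u = 0)
    (hδk : ∀ u v, σ (δk u v) = δk u v) (hδp : ∀ u v, σ (δp u v) = -(δp u v)) :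
    (∀ (l : ℝ) (u v : X),
        δk u v + l • δp u v + ⁅αk u + l • αp u, αk v + l • αp v⁆ = 0) ↔
    ((∀ u v : X, δk u v + δp u v + ⁅αk u + αp u, αk v + αp v⁆ = 0) ∧
     (∀ u v : X, ⁅αp u, αp v⁆ = 0)) := by
  have expand : ∀ (l : ℝ) (u v : X),
      δk u v + l • δp u v + ⁅αk u + l • αp u, αk v + l • αp v⁆ =
      (δk u v + ⁅αk u, αk v⁆) +
        l • (δp u v + ⁅αk u, αp v⁆ + ⁅αp u, αk v⁆) +
        (l * l) • ⁅αp u, αp v⁆ := by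
    intro l u v
    simp only [lie_add, add_lie, lie_smul, smul_lie, smul_add, smul_smul]
    abel
  have key1 : ∀ u v : X,
      δk u v + δp u v + ⁅αk u + αp u, αk v + αp v⁆ =
      (δk u v + ⁅αk u, αk v⁆) +
        (δp u v + ⁅αk u, αp v⁆ + ⁅αp u, αk v⁆) + ⁅αp u, αp v⁆ := by
    intro u v
    simp only [lie_add, add_lie]
    abel
  have keym : ∀ u v : X,
      δk u v + -δp u v + ⁅αk u + -αp u, αk v + -αp v⁆ =
      (δk u v + ⁅αk u, αk v⁆) +
        -(δp u v + ⁅αk u, αp v⁆ + ⁅αp u, αk v⁆) + ⁅αp u, αp v⁆ := by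
    intro u v
    simp only [lie_add, add_lie, lie_neg, neg_lie, neg_neg]
    abel
  constructor
  · intro h
    have ha : ∀ u v : X, δk u v + ⁅αk u, αk v⁆ = 0 := by
      intro u v
      have := h 0 u v
      rw [expand] at this
      simpa using this
    have hbc : ∀ u v : X,
        (δp u v + ⁅αk u, αp v⁆ + ⁅αp u, αk v⁆) = 0 ∧ ⁅αp u, αp v⁆ = 0 := by
      intro u v
      apply three_coeffs _ _ _ (ha u v)
      · rw [← key1]
        have := h 1 u v
        simpa using this
      · rw [← keym]
        have := h (-1) u v
        simpa using this
    refine ⟨fun u v => ?_, fun u v => (hbc u v).2⟩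
    rw [key1, ha u v, (hbc u v).1, (hbc u v).2]
    simp
  · rintro ⟨h1, hC⟩
    have em : ∀ u v : X,
        (δk u v + ⁅αk u, αk v⁆) +
          -(δp u v + ⁅αk u, αp v⁆ + ⁅αp u, αk v⁆) + ⁅αp u, αp v⁆ = 0 := by
      intro u v
      rw [← keym]
      have hs := congrArg σ (h1 u v)
      rw [map_zero σ, map_add σ, map_add σ, LieHom.map_lie σ, map_add σ, map_add σ,
        hδk, hδp, hαk, hαp, hαk, hαp] at hs
      exact hs
    intro l u v
    have e1 : (δk u v + ⁅αk u, αk v⁆) +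
        (δp u v + ⁅αk u, αp v⁆ + ⁅αp u, αk v⁆) + ⁅αp u, αp v⁆ = 0 := by
      rw [← key1]; exact h1 u v
    rw [hC u v, add_zero] at e1
    have em' := em u v
    rw [hC u v, add_zero] at em'
    obtain ⟨hA, hB⟩ := half_sum _ _ e1 em'
    rw [expand, hC u v, smul_zero, add_zero, hA, hB, smul_zero, add_zero]
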